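/- Let a and b be positive integers with a ≤ b. If Σ_{i=0}^{a} (−1)^i C(a, i) C(b, i) = 0, then b divides a!. -/

import Mathlib

/-- If `1 ≤ a ≤ b` and `Σ_{i=0}^{a} (−1)^i C(a,i) C(b,i) = 0`, then `b` divides `a!`. -/
theorem stmt_18 (a b : ℕ) (ha : 0 < a) (hab : a ≤ b)
    (h : ∑ i ∈ Finset.range (a + 1),
      (-1 : ℤ) ^ i * (a.choose i : ℤ) * (b.choose i : ℤ) = 0) :
    b ∣ Nat.factorial a := by
  by_contra hnd
  have hb0 : b ≠ 0 := by omega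
  have hfa : a.factorial ≠ 0 := a.factorial_ne_zero
  rw [← Nat.factorization_le_iff_dvd hb0 hfa] at hnd
  rw [Finsupp.le_def] at hnd
  push_neg at hnd
  obtain ⟨p, hpL⟩ := hnd
  set L := (a.factorial).factorization p with hL
  have hp : p.Prime := by
    have : p ∈ b.factorization.support := by
      rw [Finsupp.mem_support_iff]
      omega
    exact Nat.prime_of_mem_primeFactors (by simpa using this)
  -- p^(L+1) ∣ b
  have hpb : p ^ (L + 1) ∣ b := by
    calc p ^ (L + 1) ∣ p ^ (b.factorization p) := pow_dvd_pow p (by omega)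
    _ ∣ b := Nat.ordProj_dvd b p
  -- key divisibility
  have hdvd : ∀ i, 1 ≤ i → i ≤ a → p ∣ b.choose i := by
    intro i hi1 hi2
    by_contra hpc
    have hcop : Nat.Coprime (p ^ (L + 1)) (b.choose i) :=
      Nat.Coprime.pow_left _ ((Nat.Prime.coprime_iff_not_dvd hp).2 hpc)
    have hkey : b * (b - 1).choose (i - 1) = b.choose i * i := by
      have := Nat.add_one_mul_choose_eq (b - 1) (i - 1)
      have h1 : b - 1 + 1 = b := by omega
      have h2 : i - 1 + 1 = i := by omega
      rwa [h1, h2] at this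
    have hdvd2 : p ^ (L + 1) ∣ b.choose i * i :=
      hkey ▸ Dvd.dvd.mul_right hpb _
    have hdvd3 : p ^ (L + 1) ∣ i := hcop.dvd_of_dvd_mul_left hdvd2
    have hdvd4 : p ^ (L + 1) ∣ a.factorial :=
      hdvd3.trans (Nat.dvd_factorial (by omega) hi2)
    have := (Nat.Prime.pow_dvd_iff_le_factorization hp hfa).1 hdvd4
    omega
  -- now the sum mod p
  rw [Finset.sum_range_succ'] at h
  simp only [pow_zero, Nat.choose_zero_right, Nat.cast_one, one_mul, mul_one] at h
  have hs : (p : ℤ) ∣ ∑ i ∈ Finset.range a,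
      (-1 : ℤ) ^ (i + 1) * (a.choose (i + 1) : ℤ) * (b.choose (i + 1) : ℤ) := by
    refine Finset.dvd_sum fun i hi => ?_
    have : (p : ℤ) ∣ (b.choose (i + 1) : ℤ) := by
      exact_mod_cast Int.natCast_dvd_natCast.2
        (hdvd (i + 1) (by omega) (by simpa using Finset.mem_range.1 hi))
    exact this.mul_left _
  have h1 : (p : ℤ) ∣ 1 := by
    have : (1 : ℤ) = -(∑ i ∈ Finset.range a,
        (-1 : ℤ) ^ (i + 1) * (a.choose (i + 1) : ℤ) * (b.choose (i + 1) : ℤ)) := by linarith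
    rw [this]
    exact hs.neg_right
  have : p ∣ 1 := by exact_mod_cast h1
  exact hp.one_lt.ne' (Nat.dvd_one.1 this)
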